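/- Let D be a finite set and Γ a constraint language over D that contains every permutation relation over D. If some majority operation on D preserves every relation of Γ, then the dual discriminator on D preserves every relation of Γ. -/

import Mathlib

/-- A `k`-ary operation `f` on `D` preserves an `m`-ary relation `R ⊆ D^m`. -/
def Preserves {D : Type*} {k m : ℕ} (f : (Fin k → D) → D) (R : Set (Fin m → D)) : Prop :=
  ∀ a : Fin k → (Fin m → D), (∀ i, a i ∈ R) → (fun j => f fun i => a i j) ∈ R

/-- The dual discriminator: outputs `a` if at least two of the arguments equal `a`,
and the first argument if the arguments are pairwise distinct. -/
def dualDisc {D : Type*} [DecidableEq D] (x y z : D) : D :=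
  if x = y then x else if x = z then x else if y = z then y else x

lemma key {D : Type*} [DecidableEq D] (f : (Fin 3 → D) → D)
    (hmaj : ∀ a b : D, f ![a, a, b] = a ∧ f ![a, b, a] = a ∧ f ![b, a, a] = a)
    (hequi : ∀ σ : Equiv.Perm D, ∀ x : Fin 3 → D, f (fun i => σ (x i)) = σ (f x))
    (x y z : D) :
    f ![x, f ![y, x, z], f ![y, z, f ![z, y, x]]] = dualDisc x y z := by
  unfold dualDisc
  have hvec : ∀ (σ : Equiv.Perm D) (a b c : D),
      (fun i => σ ((![a, b, c] : Fin 3 → D) i)) = ![σ a, σ b, σ c] := by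
    intro σ a b c; funext i; fin_cases i <;> rfl
  have key4 : ∀ (σ : Equiv.Perm D) (a b c : D),
      f ![σ a, σ b, σ c] = σ (f ![a, b, c]) := by
    intro σ a b c
    have h := hequi σ ![a, b, c]
    rwa [hvec] at h
  by_cases hxy : x = y
  · subst hxy
    rw [(hmaj x z).1, (hmaj x z).2.2, (hmaj x z).2.1, (hmaj x x).1, if_pos rfl]
  · by_cases hyz : y = z
    · subst hyz
      rw [(hmaj y x).2.1, (hmaj y x).1, (hmaj y y).1, (hmaj y x).2.2,
        if_neg hxy, if_neg hxy, if_pos rfl]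
    · by_cases hxz : x = z
      · subst hxz
        rw [(hmaj x y).2.2, (hmaj x y).2.1, (hmaj x y).2.2, (hmaj x x).1,
          if_neg hxy, if_pos rfl]
      · -- pairwise distinct case
        rw [if_neg hxy, if_neg hxz, if_neg hyz]
        obtain ⟨w, hw⟩ : ∃ w, f ![x, y, z] = w := ⟨_, rfl⟩
        have ha : f ![y, x, z] = Equiv.swap x y w := by
          have h := key4 (Equiv.swap x y) x y z
          rwa [hw, Equiv.swap_apply_left, Equiv.swap_apply_right,
            Equiv.swap_apply_of_ne_of_ne (Ne.symm hxz) (Ne.symm hyz)] at h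
        have hc : f ![z, y, x] = Equiv.swap x z w := by
          have h := key4 (Equiv.swap x z) x y z
          rwa [hw, Equiv.swap_apply_left, Equiv.swap_apply_right,
            Equiv.swap_apply_of_ne_of_ne (Ne.symm hxy) hyz] at h
        -- f ![y, z, x] = swap x z (swap x y w)
        have hb : f ![y, z, x] = Equiv.swap x z (Equiv.swap x y w) := by
          have h := key4 (Equiv.swap x z) y x z
          rwa [ha, Equiv.swap_apply_left, Equiv.swap_apply_right,
            Equiv.swap_apply_of_ne_of_ne (Ne.symm hxy) hyz] at h
        rw [ha, hc]
        by_cases hwx : w = x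
        · rw [hwx, Equiv.swap_apply_left, Equiv.swap_apply_left,
            (hmaj z y).2.2, hw, hwx]
        · by_cases hwy : w = y
          · rw [hwy, Equiv.swap_apply_right,
              Equiv.swap_apply_of_ne_of_ne (Ne.symm hxy) hyz,
              (hmaj y z).2.1, (hmaj x y).1]
          · by_cases hwz : w = z
            · have hb' : f ![y, z, x] = x := by
                rw [hb, hwz, Equiv.swap_apply_of_ne_of_ne (Ne.symm hxz) (Ne.symm hyz),
                  Equiv.swap_apply_right]
              rw [hwz, Equiv.swap_apply_of_ne_of_ne (Ne.symm hxz) (Ne.symm hyz),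
                Equiv.swap_apply_right, hb', (hmaj x z).2.1]
            · -- w outside {x, y, z}
              have hd : f ![y, z, w] = x := by
                have h := key4 (Equiv.swap x w) y z x
                rwa [hb, Equiv.swap_apply_of_ne_of_ne hwx hwy,
                  Equiv.swap_apply_of_ne_of_ne hwx hwz,
                  Equiv.swap_apply_of_ne_of_ne (Ne.symm hxy) (Ne.symm hwy),
                  Equiv.swap_apply_of_ne_of_ne (Ne.symm hxz) (Ne.symm hwz),
                  Equiv.swap_apply_left, Equiv.swap_apply_right] at h
              rw [Equiv.swap_apply_of_ne_of_ne hwx hwy,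
                Equiv.swap_apply_of_ne_of_ne hwx hwz, hd, (hmaj x w).2.1]

/-- if a constraint language `Γ` contains every permutation relation and is
preserved by some majority operation, then it is preserved by the dual discriminator. -/
theorem stmt14 {D : Type*} [Fintype D] [DecidableEq D]
    (Γ : Set (Σ m : ℕ, Set (Fin m → D))) (hΓfin : Γ.Finite)
    (hperm : ∀ σ : Equiv.Perm D,
      (⟨2, {t : Fin 2 → D | t 1 = σ (t 0)}⟩ : Σ m : ℕ, Set (Fin m → D)) ∈ Γ)
    (f : (Fin 3 → D) → D)
    (hmaj : ∀ a b : D, f ![a, a, b] = a ∧ f ![a, b, a] = a ∧ f ![b, a, a] = a)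
    (hf : ∀ R ∈ Γ, Preserves f R.2) :
    ∀ R ∈ Γ, Preserves (fun x : Fin 3 → D => dualDisc (x 0) (x 1) (x 2)) R.2 := by
  have hequi : ∀ σ : Equiv.Perm D, ∀ x : Fin 3 → D, f (fun i => σ (x i)) = σ (f x) := by
    intro σ x
    have hP := hf _ (hperm σ)
    have h := hP (fun i => ![x i, σ (x i)]) (by intro i; simp)
    simp only [Set.mem_setOf_eq] at h
    have e1 : (fun i => (![x i, σ (x i)] : Fin 2 → D) 1) = fun i => σ (x i) := by
      funext i; simp
    have e0 : (fun i => (![x i, σ (x i)] : Fin 2 → D) 0) = x := by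
      funext i; simp
    rw [e1, e0] at h
    exact h
  intro R hR a haR
  have app3 : ∀ (b c e : Fin R.1 → D), b ∈ R.2 → c ∈ R.2 → e ∈ R.2 →
      (fun j => f ![b j, c j, e j]) ∈ R.2 := by
    intro b c e hb hc he
    have h := hf R hR ![b, c, e] (by intro i; fin_cases i <;> assumption)
    have heq : (fun j => f fun i => (![b, c, e] : Fin 3 → Fin R.1 → D) i j)
        = fun j => f ![b j, c j, e j] := by
      funext j; congr 1; funext i; fin_cases i <;> rfl
    rwa [heq] at h
  have m2 : (fun j => f ![a 2 j, a 1 j, a 0 j]) ∈ R.2 :=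
    app3 (a 2) (a 1) (a 0) (haR 2) (haR 1) (haR 0)
  have m1 : (fun j => f ![a 1 j, a 0 j, a 2 j]) ∈ R.2 :=
    app3 (a 1) (a 0) (a 2) (haR 1) (haR 0) (haR 2)
  have m3 : (fun j => f ![a 1 j, a 2 j, f ![a 2 j, a 1 j, a 0 j]]) ∈ R.2 :=
    app3 (a 1) (a 2) (fun j => f ![a 2 j, a 1 j, a 0 j]) (haR 1) (haR 2) m2
  have m4 : (fun j => f ![a 0 j, f ![a 1 j, a 0 j, a 2 j],
      f ![a 1 j, a 2 j, f ![a 2 j, a 1 j, a 0 j]]]) ∈ R.2 :=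
    app3 _ _ _ (haR 0) m1 m3
  have hfin : (fun j => (fun x : Fin 3 → D => dualDisc (x 0) (x 1) (x 2)) fun i => a i j)
      = fun j => f ![a 0 j, f ![a 1 j, a 0 j, a 2 j],
        f ![a 1 j, a 2 j, f ![a 2 j, a 1 j, a 0 j]]] := by
    funext j
    exact (key f hmaj hequi (a 0 j) (a 1 j) (a 2 j)).symm
  rw [hfin]
  exact m4
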